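/- There exist constants $C > 0$ and $W_0 > 0$ such that for all real $W \ge W_0$ and all real $E$ with $0 < E \le W^{2/3}/2$, one has $\sum_{0 \le k \le W - E} \frac{W^k}{k!} \le C \frac{W^{1/2}}{E} \exp\left(W - \frac{E^2}{2W}\right)$. -/

import Mathlib

open Finset Real

lemma fact_aux (k d : ℕ) : (k + d).factorial ≤ k.factorial * (k + d) ^ d := by
  induction d with
  | zero => simp
  | succ d ih =>
    have h1 : (k + (d+1)).factorial = (k + d + 1) * (k + d).factorial := rfl
    calc (k + (d+1)).factorial = (k + d + 1) * (k + d).factorial := h1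
      _ ≤ (k + d + 1) * (k.factorial * (k + d) ^ d) := Nat.mul_le_mul_left _ ih
      _ = k.factorial * ((k + d) ^ d * (k + d + 1)) := by ring
      _ ≤ k.factorial * ((k + d + 1) ^ d * (k + d + 1)) :=
          Nat.mul_le_mul_left _ (Nat.mul_le_mul_right _ (Nat.pow_le_pow_left (Nat.le_succ _) d))
      _ = k.factorial * (k + (d + 1)) ^ (d + 1) := by rw [pow_succ]; ring_nf

lemma stirling_lower (n : ℕ) (hn : 1 ≤ n) :
    Real.sqrt n * ((n : ℝ) / Real.exp 1) ^ n ≤ n.factorial := by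
  obtain ⟨k, rfl⟩ : ∃ k, n = k + 1 := ⟨n - 1, (Nat.succ_pred_eq_of_pos hn).symm⟩
  have htend : Filter.Tendsto (Stirling.stirlingSeq ∘ Nat.succ) Filter.atTop (nhds (Real.sqrt π)) :=
    Stirling.tendsto_stirlingSeq_sqrt_pi.comp (Filter.tendsto_add_atTop_nat 1)
  have h1 : Real.sqrt π ≤ Stirling.stirlingSeq (k + 1) :=
    Stirling.stirlingSeq'_antitone.le_of_tendsto htend k
  have hπ : (1 : ℝ) ≤ Real.sqrt π := by
    rw [show (1:ℝ) = Real.sqrt 1 by simp]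
    exact Real.sqrt_le_sqrt (by linarith [Real.pi_gt_three])
  have hs : (1 : ℝ) ≤ Stirling.stirlingSeq (k + 1) := le_trans hπ h1
  rw [Stirling.stirlingSeq] at hs
  have hn0 : (0 : ℝ) < ((k + 1 : ℕ) : ℝ) := by positivity
  have hq : (0 : ℝ) < ((k + 1 : ℕ) : ℝ) / Real.exp 1 := by positivity
  have hs2 : (0 : ℝ) < Real.sqrt (2 * ((k + 1 : ℕ) : ℝ)) := Real.sqrt_pos.mpr (by linarith)
  have hden : (0 : ℝ) < Real.sqrt (2 * ((k + 1 : ℕ) : ℝ))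
      * (((k + 1 : ℕ) : ℝ) / Real.exp 1) ^ (k + 1) := mul_pos hs2 (pow_pos hq _)
  have h2 : Real.sqrt (2 * ((k + 1 : ℕ) : ℝ)) * (((k + 1 : ℕ) : ℝ) / Real.exp 1) ^ (k + 1)
      ≤ ((k + 1).factorial : ℝ) := by
    have := (one_le_div hden).mp hs
    exact this
  refine le_trans ?_ h2
  have hsle : Real.sqrt ((k + 1 : ℕ) : ℝ) ≤ Real.sqrt (2 * ((k + 1 : ℕ) : ℝ)) :=
    Real.sqrt_le_sqrt (by linarith)
  exact mul_le_mul_of_nonneg_right hsle (pow_nonneg hq.le _)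

lemma neg_log_le {x : ℝ} (h0 : 0 ≤ x) (h1 : x < 1) :
    -Real.log (1 - x) ≤ x + x ^ 2 / 2 + x ^ 3 / (1 - x) := by
  have h := Real.abs_log_sub_add_sum_range_le (by rwa [abs_of_nonneg h0]) 2
  rw [abs_of_nonneg h0] at h
  have hsum : ∑ i ∈ range 2, x ^ (i + 1) / (i + 1) = x + x ^ 2 / 2 := by
    norm_num [Finset.sum_range_succ]
  rw [hsum] at h
  have := (abs_le.mp h).1
  linarith

lemma sq_half_le_mul (W M : ℝ) (hW : 100 ≤ W) (hM : W / 2 - 1 ≤ M) : (W / 2) ^ 2 ≤ W * M := by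
  nlinarith

lemma exp_half_le_two : Real.exp (1 / 2) ≤ 2 := by
  have h1 : Real.exp (1 / 2) ^ 2 = Real.exp 1 := by
    rw [← Real.exp_nat_mul]; norm_num
  have h2 : Real.exp 1 < 3 := lt_trans Real.exp_one_lt_d9 (by norm_num)
  nlinarith [Real.exp_pos (1/2 : ℝ)]

set_option maxHeartbeats 1000000 in
/-- Gaussian-type bound for the lower tail of the exponential series:
there are `C, W₀ > 0` such that for `W ≥ W₀` and `0 < E ≤ W^(2/3)/2`,
`∑_{0 ≤ k ≤ W-E} W^k/k! ≤ C (W^(1/2)/E) exp(W - E²/(2W))`. -/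
theorem exp_series_lower_tail_bound :
    ∃ C > (0 : ℝ), ∃ W₀ > (0 : ℝ), ∀ W : ℝ, W₀ ≤ W → ∀ E : ℝ, 0 < E →
      E ≤ W ^ ((2 : ℝ) / 3) / 2 →
      ∑ k ∈ Finset.range (⌊W - E⌋₊ + 1),
          (if (k : ℝ) ≤ W - E then W ^ k / (Nat.factorial k : ℝ) else 0)
        ≤ C * (W ^ ((1 : ℝ) / 2) / E) * Real.exp (W - E ^ 2 / (2 * W)) := by
  refine ⟨4, by norm_num, 100, by norm_num, fun W hW E hE hE2 => ?_⟩
  have hW0 : (0 : ℝ) < W := by linarith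
  -- E ≤ W/2
  have hpow : W ^ ((2:ℝ)/3) ≤ W := by
    have := Real.rpow_le_rpow_of_exponent_le (by linarith : 1 ≤ W) (by norm_num : (2:ℝ)/3 ≤ 1)
    simpa using this
  have hEW : E ≤ W / 2 := le_trans hE2 (by linarith)
  have hx : (0 : ℝ) < W - E := by linarith
  set m : ℕ := ⌊W - E⌋₊ with hm
  have hm_le : (m : ℝ) ≤ W - E := Nat.floor_le hx.le
  have hm_lt : W - E < (m : ℝ) + 1 := Nat.lt_floor_add_one _
  set M : ℝ := (m : ℝ) with hM
  set δ : ℝ := W - M with hδ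
  have hδE : E ≤ δ := by simp only [hδ]; linarith
  have hδ1 : δ < E + 1 := by simp only [hδ]; linarith
  have hδpos : (0 : ℝ) < δ := lt_of_lt_of_le hE hδE
  have hm1 : 1 ≤ m := Nat.le_floor (by push_cast; linarith)
  have hM1 : (1 : ℝ) ≤ M := by rw [hM]; exact_mod_cast hm1
  have hMpos : (0 : ℝ) < M := by linarith
  have hMlt : M < W := by linarith
  have hMhalf : W / 2 - 1 ≤ M := by simp only [hM]; linarith
  -- cube bound : δ ^ 3 ≤ W ^ 2
  have ha3 : (W ^ ((2:ℝ)/3)) ^ (3 : ℕ) = W ^ 2 := by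
    rw [← Real.rpow_natCast (W ^ ((2:ℝ)/3)) 3, ← Real.rpow_mul hW0.le,
      show ((2:ℝ)/3 * ((3:ℕ):ℝ)) = ((2:ℕ):ℝ) by norm_num, Real.rpow_natCast]
  have hapos : (0 : ℝ) < W ^ ((2:ℝ)/3) := Real.rpow_pos_of_pos hW0 _
  have ha4 : (4 : ℝ) ≤ W ^ ((2:ℝ)/3) := by
    have hc : (4 : ℝ) ^ (3 : ℕ) ≤ (W ^ ((2:ℝ)/3)) ^ (3 : ℕ) := by
      rw [ha3]; nlinarith [hW]
    exact le_of_pow_le_pow_left₀ (by norm_num) hapos.le hc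
  have hδa : δ ≤ W ^ ((2:ℝ)/3) := by linarith
  have hδcube : δ ^ 3 ≤ W ^ 2 := by
    calc δ ^ 3 ≤ (W ^ ((2:ℝ)/3)) ^ 3 := pow_le_pow_left₀ hδpos.le hδa 3
      _ = W ^ 2 := ha3
  -- Step 0 : remove the if
  have hstep0 : ∑ k ∈ Finset.range (m + 1),
      (if (k : ℝ) ≤ W - E then W ^ k / (Nat.factorial k : ℝ) else 0)
      ≤ ∑ k ∈ Finset.range (m + 1), W ^ k / (Nat.factorial k : ℝ) := by
    apply Finset.sum_le_sum
    intro k _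
    split
    · exact le_refl _
    · positivity
  -- Step 1 : each term ≤ (W^m/m!) * (M/W)^(m-k)
  have hterm : ∀ k ∈ Finset.range (m + 1),
      W ^ k / (Nat.factorial k : ℝ) ≤ W ^ m / (Nat.factorial m : ℝ) * (M / W) ^ (m - k) := by
    intro k hk
    have hk' : k ≤ m := Nat.lt_succ_iff.mp (Finset.mem_range.mp hk)
    have hfac_nat : m.factorial ≤ k.factorial * m ^ (m - k) := by
      have := fact_aux k (m - k)
      rwa [Nat.add_sub_cancel' hk'] at this
    have hfac : (m.factorial : ℝ) ≤ (k.factorial : ℝ) * M ^ (m - k) := by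
      rw [hM]; exact_mod_cast hfac_nat
    have hWm : W ^ m = W ^ k * W ^ (m - k) := by
      rw [← pow_add, Nat.add_sub_cancel' hk']
    have hrhs : W ^ m / (Nat.factorial m : ℝ) * (M / W) ^ (m - k)
        = W ^ k * M ^ (m - k) / (Nat.factorial m : ℝ) := by
      rw [div_pow, hWm]
      have h1 : (Nat.factorial m : ℝ) ≠ 0 := by positivity
      have h2 : (W : ℝ) ^ (m - k) ≠ 0 := by positivity
      field_simp
      try ring
    rw [hrhs, div_le_div_iff₀ (by positivity) (by positivity)]
    calc W ^ k * (Nat.factorial m : ℝ) ≤ W ^ k * ((k.factorial : ℝ) * M ^ (m - k)) :=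
          mul_le_mul_of_nonneg_left hfac (pow_nonneg hW0.le k)
      _ = W ^ k * M ^ (m - k) * (k.factorial : ℝ) := by ring
  -- Step 2 : geometric sum
  have hr0 : (0 : ℝ) ≤ M / W := by positivity
  have hr1 : M / W < 1 := (div_lt_one hW0).mpr hMlt
  have hgeom : ∑ k ∈ Finset.range (m + 1), (M / W) ^ (m - k) ≤ W / δ := by
    have hrefl := Finset.sum_range_reflect (fun j => (M / W) ^ j) (m + 1)
    have heq : ∑ k ∈ Finset.range (m + 1), (M / W) ^ (m - k)
        = ∑ j ∈ Finset.range (m + 1), (M / W) ^ j := by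
      rw [← hrefl]
      apply Finset.sum_congr rfl
      intro j hj
      congr 1 <;> omega
    rw [heq, geom_sum_eq (ne_of_lt hr1) (m + 1)]
    rw [div_le_iff_of_neg (by linarith : M / W - 1 < 0)]
    have e1 : W / δ * (M / W - 1) = -1 := by
      rw [hδ]
      have hne : W - M ≠ 0 := by linarith
      field_simp
      ring
    have hpow_nonneg : (0 : ℝ) ≤ (M / W) ^ (m + 1) := by positivity
    linarith [hpow_nonneg, e1.le, e1.ge]
  -- combine steps 1,2
  have hS : ∑ k ∈ Finset.range (m + 1), W ^ k / (Nat.factorial k : ℝ)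
      ≤ W ^ m / (Nat.factorial m : ℝ) * (W / δ) := by
    calc ∑ k ∈ Finset.range (m + 1), W ^ k / (Nat.factorial k : ℝ)
        ≤ ∑ k ∈ Finset.range (m + 1), W ^ m / (Nat.factorial m : ℝ) * (M / W) ^ (m - k) :=
          Finset.sum_le_sum hterm
      _ = W ^ m / (Nat.factorial m : ℝ) * ∑ k ∈ Finset.range (m + 1), (M / W) ^ (m - k) := by
          rw [Finset.mul_sum]
      _ ≤ W ^ m / (Nat.factorial m : ℝ) * (W / δ) := by
          apply mul_le_mul_of_nonneg_left hgeom (by positivity)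
  -- Step 3 : Stirling
  have hstir := stirling_lower m hm1
  have hMe : (0 : ℝ) < M / Real.exp 1 := by positivity
  -- exponential expressions
  have hWexp : W ^ m = Real.exp (M * Real.log W) := by
    rw [← Real.exp_log hW0, ← Real.exp_nat_mul]
    simp [hM]
  have hMexp : (M / Real.exp 1) ^ m = Real.exp (M * (Real.log M - 1)) := by
    rw [← Real.exp_log hMe, ← Real.exp_nat_mul, Real.log_div hMpos.ne' (Real.exp_ne_zero 1),
      Real.log_exp]
    try simp [hM]
  -- key exponent inequality
  have hxW0 : (0 : ℝ) ≤ δ / W := by positivity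
  have hxW1 : δ / W < 1 := (div_lt_one hW0).mpr (by linarith)
  have hlogb := neg_log_le hxW0 hxW1
  have h1mx : 1 - δ / W = M / W := by field_simp [hδ]; linarith
  have hlogWM : Real.log W - Real.log M = -Real.log (1 - δ / W) := by
    rw [h1mx, Real.log_div hMpos.ne' hW0.ne']
    ring
  have hkey : M * Real.log W - M * Real.log M + M ≤ W - E ^ 2 / (2 * W) + 1 / 2 := by
    have h2 : M * (Real.log W - Real.log M) ≤ M * (δ / W + (δ / W) ^ 2 / 2 + (δ / W) ^ 3 / (1 - δ / W)) := by
      rw [hlogWM]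
      exact mul_le_mul_of_nonneg_left hlogb hMpos.le
    rw [mul_sub] at h2
    have h3 : M * (δ / W + (δ / W) ^ 2 / 2 + (δ / W) ^ 3 / (1 - δ / W))
        = δ - δ ^ 2 / (2 * W) + δ ^ 3 / (2 * W ^ 2) := by
      rw [h1mx, hδ]
      field_simp
      ring
    have hE2 : E ^ 2 ≤ δ ^ 2 := pow_le_pow_left₀ hE.le hδE 2
    have h4 : δ ^ 3 / (2 * W ^ 2) ≤ 1 / 2 := by
      rw [div_le_div_iff₀ (by positivity) (by norm_num)]
      linarith [hδcube]
    have h6 : E ^ 2 / (2 * W) ≤ δ ^ 2 / (2 * W) := by gcongr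
    have hMW : M = W - δ := by simp [hδ]
    linarith [h2, h3.le, h3.ge, h4, h6, hMW.le, hMW.ge]
  -- W^m / m! bound
  have hfac_pos : (0 : ℝ) < (m.factorial : ℝ) := by positivity
  have hsqrtM_pos : (0 : ℝ) < Real.sqrt M := Real.sqrt_pos.mpr hMpos
  have hstir' : Real.sqrt M * Real.exp (M * (Real.log M - 1)) ≤ (m.factorial : ℝ) := by
    calc Real.sqrt M * Real.exp (M * (Real.log M - 1))
        = Real.sqrt M * (M / Real.exp 1) ^ m := by rw [hMexp]
      _ ≤ (m.factorial : ℝ) := by simpa [hM] using hstir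
  have hWfac : W ^ m / (m.factorial : ℝ)
      ≤ Real.exp (W - E ^ 2 / (2 * W) + 1 / 2) / Real.sqrt M := by
    rw [div_le_div_iff₀ hfac_pos hsqrtM_pos, hWexp]
    calc Real.exp (M * Real.log W) * Real.sqrt M
        = Real.sqrt M * Real.exp (M * (Real.log M - 1)) * Real.exp (M * Real.log W - M * Real.log M + M) := by
          rw [mul_assoc, ← Real.exp_add,
            show M * (Real.log M - 1) + (M * Real.log W - M * Real.log M + M)
              = M * Real.log W by ring]
          ring
      _ ≤ (m.factorial : ℝ) * Real.exp (W - E ^ 2 / (2 * W) + 1 / 2) := by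
          apply mul_le_mul hstir' (Real.exp_le_exp.mpr hkey) (Real.exp_nonneg _) hfac_pos.le
      _ = Real.exp (W - E ^ 2 / (2 * W) + 1 / 2) * (m.factorial : ℝ) := by ring
  -- final combination
  have hsqrt4 : Real.sqrt 4 = 2 := by
    rw [show (4:ℝ) = 2 ^ 2 by norm_num, Real.sqrt_sq (by norm_num : (0:ℝ) ≤ 2)]
  have hsqrtM_ge : Real.sqrt W / 2 ≤ Real.sqrt M := by
    have h1 : Real.sqrt (W / 4) ≤ Real.sqrt M := Real.sqrt_le_sqrt (by linarith)
    rwa [Real.sqrt_div hW0.le, hsqrt4] at h1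
  have hsqW : Real.sqrt W * Real.sqrt W = W := Real.mul_self_sqrt hW0.le
  have hexp_half : Real.exp (1 / 2) ≤ 2 := exp_half_le_two
  have hsqrtW_pos : (0 : ℝ) < Real.sqrt W := Real.sqrt_pos.mpr hW0
  have hrpow : W ^ ((1:ℝ)/2) = Real.sqrt W := (Real.sqrt_eq_rpow W).symm
  have hB : Real.exp (1 / 2) * W / (Real.sqrt M * δ) ≤ 4 * Real.sqrt W / E := by
    rw [div_le_div_iff₀ (by positivity) hE]
    have h1 : W / 2 ≤ Real.sqrt W * Real.sqrt M := by
      have h0 : (W / 2) ^ 2 ≤ W * M := sq_half_le_mul W M hW hMhalf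
      calc W / 2 = Real.sqrt ((W / 2) ^ 2) := (Real.sqrt_sq (by linarith)).symm
        _ ≤ Real.sqrt (W * M) := Real.sqrt_le_sqrt h0
        _ = Real.sqrt W * Real.sqrt M := Real.sqrt_mul hW0.le M
    have h3 : W * E ≤ W * δ := mul_le_mul_of_nonneg_left hδE hW0.le
    calc Real.exp (1 / 2) * W * E = Real.exp (1 / 2) * (W * E) := by ring
      _ ≤ 2 * (W * E) := mul_le_mul_of_nonneg_right hexp_half (by positivity)
      _ ≤ 2 * (W * δ) := by linarith
      _ = 4 * (W / 2) * δ := by ring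
      _ ≤ 4 * (Real.sqrt W * Real.sqrt M) * δ :=
          mul_le_mul_of_nonneg_right (by linarith) hδpos.le
      _ = 4 * Real.sqrt W * (Real.sqrt M * δ) := by ring
  have hfinal : Real.exp (W - E ^ 2 / (2 * W) + 1 / 2) / Real.sqrt M * (W / δ)
      ≤ 4 * (W ^ ((1:ℝ)/2) / E) * Real.exp (W - E ^ 2 / (2 * W)) := by
    have heq : Real.exp (W - E ^ 2 / (2 * W) + 1 / 2) / Real.sqrt M * (W / δ)
        = Real.exp (W - E ^ 2 / (2 * W)) * (Real.exp (1 / 2) * W / (Real.sqrt M * δ)) := by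
      rw [Real.exp_add]
      field_simp
    rw [heq, hrpow]
    calc Real.exp (W - E ^ 2 / (2 * W)) * (Real.exp (1 / 2) * W / (Real.sqrt M * δ))
        ≤ Real.exp (W - E ^ 2 / (2 * W)) * (4 * Real.sqrt W / E) :=
          mul_le_mul_of_nonneg_left hB (Real.exp_nonneg _)
      _ = 4 * (Real.sqrt W / E) * Real.exp (W - E ^ 2 / (2 * W)) := by ring
  calc ∑ k ∈ Finset.range (m + 1),
        (if (k : ℝ) ≤ W - E then W ^ k / (Nat.factorial k : ℝ) else 0)
      ≤ ∑ k ∈ Finset.range (m + 1), W ^ k / (Nat.factorial k : ℝ) := hstep0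
    _ ≤ W ^ m / (Nat.factorial m : ℝ) * (W / δ) := hS
    _ ≤ Real.exp (W - E ^ 2 / (2 * W) + 1 / 2) / Real.sqrt M * (W / δ) :=
        mul_le_mul_of_nonneg_right hWfac (by positivity)
    _ ≤ 4 * (W ^ ((1:ℝ)/2) / E) * Real.exp (W - E ^ 2 / (2 * W)) := hfinal
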